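/- λ₁(β) is a lower bound for eigenvalues: let β ∈ (0,1/2), let λ be an eigenvalue of Δ_β (i.e., there is a bounded u ≢ 0 with -Δ_β u = λ u on T_m and u → 0 along branches), and let θ ∈ A_β. Then λ ≥ θ. -/

import Mathlib

open Filter Finset Topology

/-- The weight `p_β`: `1` if `β = 0`, and `β/(1-β)` otherwise. -/
noncomputable def pB (β : ℝ) : ℝ := if β = 0 then 1 else β / (1 - β)

/-- Vertices of the regular `m`-branching tree are finite sequences over `Fin m`
(the root is `[]`, the successors of `x` are `i :: x`, the predecessor of `a :: t` is `t`,
and the level `|x|` is the list length).  The `β`-Laplacian on the tree. -/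
noncomputable def lapB (m : ℕ) (β : ℝ) (u : List (Fin m) → ℝ) : List (Fin m) → ℝ
  | [] => (∑ i : Fin m, u [i]) / m - u []
  | a :: t =>
      (β * u t + (1 - β) * (∑ i : Fin m, u (i :: a :: t)) / m - u (a :: t)) *
        pB β ^ (-((a :: t).length : ℤ))

/-- A branch: an infinite path starting at the root, following successors. -/
def IsBranch (m : ℕ) (b : ℕ → List (Fin m)) : Prop :=
  b 0 = [] ∧ ∀ n, ∃ i : Fin m, b (n + 1) = i :: b n

/-- Homogeneous Dirichlet boundary condition: `u → 0` along every branch. -/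
def ZeroOnBoundary (m : ℕ) (u : List (Fin m) → ℝ) : Prop :=
  ∀ b : ℕ → List (Fin m), IsBranch m b → Tendsto (fun n => u (b n)) atTop (𝓝 0)

/-- `lam` is a principal eigenvalue of `Δ_β`: it is positive and admits a bounded
nonnegative nontrivial eigenfunction vanishing on the boundary. -/
def IsPrincipalEigenvalue (m : ℕ) (β lam : ℝ) : Prop :=
  0 < lam ∧ ∃ u : List (Fin m) → ℝ,
    (∃ M, ∀ x, |u x| ≤ M) ∧ (∀ x, 0 ≤ u x) ∧ u ≠ 0 ∧
    (∀ x, -lapB m β u x = lam * u x) ∧ ZeroOnBoundary m u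

/-- Membership in the set `A_β`. -/
def memA (m : ℕ) (β lam : ℝ) : Prop :=
  0 < lam ∧ ∃ v : List (Fin m) → ℝ, ∃ c C : ℝ, 0 < c ∧
    (∀ x, c < v x ∧ v x < C) ∧ ∀ x, lapB m β v x + lam * v x ≤ 0

/-- `λ₁(β) = sup A_β`. -/
noncomputable def lam1 (m : ℕ) (β : ℝ) : ℝ := sSup {lam | memA m β lam}


lemma lapB_neg (m : ℕ) (β : ℝ) (u : List (Fin m) → ℝ) (x : List (Fin m)) :
    lapB m β (fun y => -u y) x = -lapB m β u x := by
  cases x with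
  | nil => simp [lapB]; ring
  | cons a t => simp [lapB]; ring

lemma konig {m : ℕ} (S : Set (List (Fin m))) (a₀ : List (Fin m))
    (hinf : {y | y ∈ S ∧ a₀ <:+ y}.Infinite) :
    ∃ b : ℕ → List (Fin m), b 0 = a₀ ∧ (∀ n, ∃ i : Fin m, b (n + 1) = i :: b n) ∧
      ∀ n, a₀ <:+ b n ∧ {y | y ∈ S ∧ b n <:+ y}.Infinite := by
  classical
  have step : ∀ x : List (Fin m), {y | y ∈ S ∧ x <:+ y}.Infinite →
      ∃ i : Fin m, {y | y ∈ S ∧ (i :: x) <:+ y}.Infinite := by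
    intro x hx
    by_contra hcon
    push_neg at hcon
    have hfins : ∀ i : Fin m, {y | y ∈ S ∧ (i :: x) <:+ y}.Finite :=
      fun i => hcon i
    have hsub : {y | y ∈ S ∧ x <:+ y} ⊆
        insert x (⋃ i : Fin m, {y | y ∈ S ∧ (i :: x) <:+ y}) := by
      rintro y ⟨hyS, w, hw⟩
      rcases eq_or_ne y x with h | h
      · exact Set.mem_insert_iff.2 (Or.inl h)
      · rcases w.eq_nil_or_concat with rfl | ⟨l', i, rfl⟩
        · simp only [List.nil_append] at hw; exact absurd hw.symm h
        · refine Set.mem_insert_iff.2 (Or.inr (Set.mem_iUnion.2 ⟨i, hyS, ⟨l', ?_⟩⟩))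
          rw [← hw]; simp [List.concat_eq_append, List.append_assoc]
    exact hx (((Set.finite_iUnion hfins).insert x).subset hsub)
  choose f hf using step
  let bb : ℕ → {x : List (Fin m) // {y | y ∈ S ∧ x <:+ y}.Infinite} := fun n =>
    Nat.rec ⟨a₀, hinf⟩ (fun _ ih => ⟨f ih.1 ih.2 :: ih.1, hf ih.1 ih.2⟩) n
  have hbs : ∀ n, (bb (n + 1)).1 = f (bb n).1 (bb n).2 :: (bb n).1 := fun n => rfl
  refine ⟨fun n => (bb n).1, rfl, fun n => ⟨f (bb n).1 (bb n).2, hbs n⟩, fun n => ⟨?_, (bb n).2⟩⟩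
  induction n with
  | zero => exact List.suffix_rfl
  | succ n ih =>
      show a₀ <:+ (bb (n+1)).1
      rw [hbs n]; exact List.IsSuffix.trans ih (List.suffix_cons _ _)

lemma key (m : ℕ) (hm : 2 ≤ m) (β : ℝ) (hβ0 : 0 < β) (hβ1 : β < 1 / 2)
    (lam : ℝ) (u : List (Fin m) → ℝ)
    (heig : ∀ x, -lapB m β u x = lam * u x)
    (hbdry : ZeroOnBoundary m u)
    (x₀ : List (Fin m)) (hux₀ : 0 < u x₀)
    (θ : ℝ) (hθ : memA m β θ) : θ ≤ lam := by
  classical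
  obtain ⟨hθ0, v, c, C, hc0, hv, hsuper⟩ := hθ
  have hm0 : (0 : ℝ) < (m : ℝ) := by exact_mod_cast (by omega : 0 < m)
  have hβ2 : (0 : ℝ) < 1 - β := by linarith
  have hpB : pB β = β / (1 - β) := by rw [pB, if_neg hβ0.ne']
  have hp : 0 < pB β := by rw [hpB]; exact div_pos hβ0 hβ2
  have hvpos : ∀ y, 0 < v y := fun y => hc0.trans (hv y).1
  have hC0 : 0 < C := hc0.trans ((hv x₀).1.trans (hv x₀).2)
  have h2C : (0 : ℝ) < 2 * C := by linarith
  set τ : ℝ := u x₀ * c / (2 * C) with hτdef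
  have hτ0 : 0 < τ := div_pos (mul_pos hux₀ hc0) h2C
  have hτC : τ * (2 * C) = u x₀ * c := div_mul_cancel₀ _ h2C.ne'
  have hτx₀ : τ ≤ u x₀ := by nlinarith [(hv x₀).1, (hv x₀).2]
  set L := x₀.length with hL
  set Q : ℕ → Prop := fun j => L ≤ j ∨ u (x₀.drop (j + 1)) < τ with hQdef
  have hQex : ∃ j, Q j := ⟨L, Or.inl le_rfl⟩
  set j₀ := Nat.find hQex with hj₀def
  have hj₀L : j₀ ≤ L := Nat.find_le (Or.inl le_rfl)
  set a₀ := x₀.drop j₀ with ha₀def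
  have lemA : ∀ j, j ≤ j₀ → τ ≤ u (x₀.drop j) := by
    intro j hj
    cases j with
    | zero => simpa using hτx₀
    | succ k =>
        have hk : k < j₀ := by omega
        have hnq : ¬ (L ≤ k ∨ u (x₀.drop (k + 1)) < τ) := Nat.find_min hQex hk
        push_neg at hnq
        exact hnq.2
  have hτa₀ : τ ≤ u a₀ := lemA j₀ le_rfl
  set R' : Set (List (Fin m)) :=
    {y | a₀ <:+ y ∧ ∀ z, a₀ <:+ z → z <:+ y → τ ≤ u z} with hR'def
  have hx₀R : x₀ ∈ R' := by
    refine ⟨List.drop_suffix j₀ x₀, ?_⟩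
    intro z hz1 hz2
    obtain ⟨w, hw⟩ := hz2
    have hzdrop : x₀.drop w.length = z := by rw [← hw]; exact List.drop_left
    have hlen1 : a₀.length ≤ z.length := hz1.length_le
    have hlena : a₀.length = L - j₀ := by rw [ha₀def, List.length_drop]
    have hwlen : w.length + z.length = L := by
      rw [hL, ← hw, List.length_append]
    have hwj : w.length ≤ j₀ := by omega
    rw [← hzdrop]; exact lemA _ hwj
  have hτR : ∀ y, y ∈ R' → τ ≤ u y := fun y hy => hy.2 y hy.1 List.suffix_rfl
  -- finiteness of R'
  have hfin : R'.Finite := by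
    by_contra hinf
    have hsub : R' ⊆ {y | y ∈ R' ∧ a₀ <:+ y} := fun y hy => ⟨hy, hy.1⟩
    have hinf' : {y | y ∈ R' ∧ a₀ <:+ y}.Infinite := Set.Infinite.mono hsub hinf
    obtain ⟨b, hb0, hbsucc, hbprop⟩ := konig R' a₀ hinf'
    have hbR : ∀ n, b n ∈ R' := by
      intro n
      obtain ⟨han, hinfn⟩ := hbprop n
      obtain ⟨y, hyR, hysuf⟩ := hinfn.nonempty
      exact ⟨han, fun z hz1 hz2 => hyR.2 z hz1 (hz2.trans hysuf)⟩
    set cfun : ℕ → List (Fin m) :=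
      fun n => if n ≤ a₀.length then a₀.drop (a₀.length - n) else b (n - a₀.length) with hcdef
    have hcK : ∀ n, a₀.length ≤ n → cfun n = b (n - a₀.length) := by
      intro n hn
      rcases eq_or_lt_of_le hn with rfl | hlt
      · rw [hcdef]; simp [hb0]
      · rw [hcdef]; simp only []; rw [if_neg (by omega)]
    have hbranch : IsBranch m cfun := by
      constructor
      · rw [hcdef]; simp
      · intro n
        by_cases h1 : n + 1 ≤ a₀.length
        · have h2 : n ≤ a₀.length := by omega
          have hidx : a₀.length - (n + 1) < a₀.length := by omega
          refine ⟨a₀[a₀.length - (n + 1)]'hidx, ?_⟩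
          rw [hcdef]; simp only []
          have hidx2 : a₀.length - (n + 1) + 1 = a₀.length - n := by omega
          rw [if_pos h1, if_pos h2, List.drop_eq_getElem_cons hidx, hidx2]
        · have h2 : a₀.length ≤ n := by omega
          obtain ⟨i, hi⟩ := hbsucc (n - a₀.length)
          refine ⟨i, ?_⟩
          rw [hcK (n + 1) (by omega), hcK n h2,
            show n + 1 - a₀.length = (n - a₀.length) + 1 by omega, hi]
    have htend := hbdry cfun hbranch
    have hev : ∀ᶠ n in atTop, u (cfun n) < τ := htend.eventually (eventually_lt_nhds hτ0)
    obtain ⟨n, hn1, hn2⟩ := (hev.and (eventually_ge_atTop a₀.length)).exists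
    rw [hcK n hn2] at hn1
    exact absurd (hτR _ (hbR _)) (not_le.2 hn1)
  -- maximize u/v over R'
  obtain ⟨xs, hxsF, hmax⟩ :=
    hfin.toFinset.exists_max_image (fun y => u y / v y) ⟨x₀, hfin.mem_toFinset.2 hx₀R⟩
  have hxsR : xs ∈ R' := hfin.mem_toFinset.1 hxsF
  have hmax' : ∀ y, y ∈ R' → u y / v y ≤ u xs / v xs :=
    fun y hy => hmax y (hfin.mem_toFinset.2 hy)
  set σ := u xs / v xs with hσdef
  have hupos : 0 < u xs := lt_of_lt_of_le hτ0 (hτR xs hxsR)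
  have hσ0 : 0 < σ := div_pos hupos (hvpos xs)
  have hxseq : σ * v xs = u xs := div_mul_cancel₀ _ (hvpos xs).ne'
  have hR'le : ∀ y, y ∈ R' → u y ≤ σ * v y := by
    intro y hy
    have h := hmax' y hy
    rw [div_le_div_iff₀ (hvpos y) (hvpos xs)] at h
    rw [hσdef, div_mul_eq_mul_div, le_div_iff₀ (hvpos xs)]
    exact h
  have houtside : ∀ y, u y < τ → u y ≤ σ * v y := by
    intro y hy
    have hx1 : u x₀ ≤ σ * v x₀ := hR'le x₀ hx₀R
    have hσC : u x₀ ≤ σ * C := by nlinarith [(hv x₀).2]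
    have e0 : τ * (2 * C) ≤ (σ * c) * (2 * C) := by
      nlinarith [mul_le_mul_of_nonneg_right hσC hc0.le, mul_pos (mul_pos hσ0 hc0) hC0]
    have e1 : τ ≤ σ * c := le_of_mul_le_mul_right e0 h2C
    have e2 : σ * c ≤ σ * v y := mul_le_mul_of_nonneg_left (hv y).1.le hσ0.le
    linarith
  have hchild : ∀ i : Fin m, u (i :: xs) ≤ σ * v (i :: xs) := by
    intro i
    by_cases hmem : (i :: xs) ∈ R'
    · exact hR'le _ hmem
    · have hsuf : a₀ <:+ i :: xs := hxsR.1.trans (List.suffix_cons i xs)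
      have hnc : ¬ ∀ z, a₀ <:+ z → z <:+ i :: xs → τ ≤ u z := fun hcy => hmem ⟨hsuf, hcy⟩
      push_neg at hnc
      obtain ⟨z, hz1, hz2, hz3⟩ := hnc
      rcases List.suffix_cons_iff.1 hz2 with rfl | hz4
      · exact houtside _ hz3
      · exact absurd (hxsR.2 z hz1 hz4) (not_le.2 hz3)
  -- split on xs
  cases xs with
  | nil =>
      have hEu := heig []
      have hEv := hsuper []
      simp only [lapB] at hEu hEv
      set Su := ∑ i : Fin m, u [i] with hSud
      set Sv := ∑ i : Fin m, v [i] with hSvd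
      have hSuv : Su ≤ σ * Sv := by
        rw [hSud, hSvd, Finset.mul_sum]
        exact Finset.sum_le_sum fun i _ => hchild i
      have h3 : Su / (m : ℝ) ≤ σ * Sv / (m : ℝ) := by
        rw [div_le_div_iff₀ hm0 hm0]
        exact mul_le_mul_of_nonneg_right hSuv hm0.le
      have h6 : θ * (σ * v []) = θ * u [] := by rw [hxseq]
      have e5 : σ * (Sv / (m : ℝ)) ≤ σ * (v [] - θ * v []) :=
        mul_le_mul_of_nonneg_left (by linarith) hσ0.le
      have hgoal : θ * u [] ≤ lam * u [] := by
        ring_nf at h3 e5 h6 hxseq hEu ⊢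
        linarith
      exact le_of_mul_le_mul_right (by linarith) hupos
  | cons a t =>
      have hEu := heig (a :: t)
      have hEv := hsuper (a :: t)
      simp only [lapB] at hEu hEv
      set P := pB β ^ (-((a :: t).length : ℤ)) with hPdef
      have hP : 0 < P := zpow_pos hp _
      set Su := ∑ i : Fin m, u (i :: a :: t) with hSud
      set Sv := ∑ i : Fin m, v (i :: a :: t) with hSvd
      have hSuv : Su ≤ σ * Sv := by
        rw [hSud, hSvd, Finset.mul_sum]
        exact Finset.sum_le_sum fun i _ => hchild i
      -- parent bound
      have hpar : u t ≤ σ * v t := by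
        by_cases heq : a₀ = a :: t
        · have hlena : a₀.length = L - j₀ := by rw [ha₀def, List.length_drop]
          have hlent : a₀.length = t.length + 1 := by rw [heq]; simp
          have hj₀L' : j₀ < L := by omega
          have ht : t = x₀.drop (j₀ + 1) := by
            have h1 : (x₀.drop j₀).tail = x₀.drop (j₀ + 1) := List.tail_drop
            rw [← h1, ← ha₀def, heq, List.tail_cons]
          rcases Nat.find_spec hQex with hQ1 | hQ2
          · omega
          · exact houtside _ (by rw [ht]; exact hQ2)
        · have hsuft : a₀ <:+ t := by
            rcases List.suffix_cons_iff.1 hxsR.1 with h | h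
            · exact absurd h heq
            · exact h
          exact hR'le _ ⟨hsuft, fun z hz1 hz2 => hxsR.2 z hz1 (hz2.trans (List.suffix_cons a t))⟩
      have hAu : β * u t + (1 - β) * Su / (m : ℝ) ≤
          σ * (β * v t + (1 - β) * Sv / (m : ℝ)) := by
        have e1 : β * u t ≤ β * (σ * v t) := mul_le_mul_of_nonneg_left hpar hβ0.le
        have e2 : (1 - β) * Su ≤ (1 - β) * (σ * Sv) :=
          mul_le_mul_of_nonneg_left hSuv hβ2.le
        have e3 : (1 - β) * Su / (m : ℝ) ≤ (1 - β) * (σ * Sv) / (m : ℝ) := by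
          rw [div_le_div_iff₀ hm0 hm0]
          exact mul_le_mul_of_nonneg_right e2 hm0.le
        have e4 : σ * (β * v t + (1 - β) * Sv / (m : ℝ)) =
            β * (σ * v t) + (1 - β) * (σ * Sv) / (m : ℝ) := by ring
        linarith
      have h1 : (β * u t + (1 - β) * Su / (m : ℝ) - u (a :: t)) * P = -(lam * u (a :: t)) := by
        linarith
      have h2 : (β * v t + (1 - β) * Sv / (m : ℝ) - v (a :: t)) * P ≤ -(θ * v (a :: t)) := by
        linarith
      have h3 : (β * u t + (1 - β) * Su / (m : ℝ)) * P ≤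
          (σ * (β * v t + (1 - β) * Sv / (m : ℝ))) * P :=
        mul_le_mul_of_nonneg_right hAu hP.le
      have h4 : σ * ((β * v t + (1 - β) * Sv / (m : ℝ) - v (a :: t)) * P) ≤
          σ * (-(θ * v (a :: t))) := mul_le_mul_of_nonneg_left h2 hσ0.le
      have h5 : σ * v (a :: t) * P = u (a :: t) * P := by rw [hxseq]
      have h6 : θ * (σ * v (a :: t)) = θ * u (a :: t) := by rw [hxseq]
      have hgoal : θ * u (a :: t) ≤ lam * u (a :: t) := by
        ring_nf at h1 h3 h4 h5 h6 ⊢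
        linarith
      exact le_of_mul_le_mul_right (by linarith) hupos

theorem stmt11 (m : ℕ) (hm : 2 ≤ m) (β : ℝ) (hβ0 : 0 < β) (hβ1 : β < 1 / 2)
    (lam : ℝ) (u : List (Fin m) → ℝ)
    (hbdd : ∃ M, ∀ x, |u x| ≤ M) (hne : u ≠ 0)
    (heig : ∀ x, -lapB m β u x = lam * u x)
    (hbdry : ZeroOnBoundary m u)
    (θ : ℝ) (hθ : memA m β θ) : θ ≤ lam := by
  classical
  have hex : ∃ x, u x ≠ 0 := by
    by_contra h
    push_neg at h
    exact hne (funext fun x => h x)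
  obtain ⟨x₀, hx₀⟩ := hex
  rcases hx₀.lt_or_gt with hneg | hpos
  · refine key m hm β hβ0 hβ1 lam (fun x => -u x) (fun x => ?_) (fun b hb => ?_) x₀
      (by simpa using hneg) θ hθ
    · rw [lapB_neg]
      linear_combination -heig x
    · simpa using (hbdry b hb).neg
  · exact key m hm β hβ0 hβ1 lam u heig hbdry x₀ hpos θ hθ
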